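/- arXiv:1401.5268 — 2 statements merged into one kernel-verified Lean document; each statement's English description precedes it below -/
import Mathlib

section
/- Let λ_max > 0, ε > 0, and suppose λ* ∈ (-λ_max, λ_max) satisfies λ*² = λ_max(λ_max - 1/(2ε)) with λ* > 0. Then the roots ξ of ξ² + ξ - 4ε²λ*(1 - (λ*/λ_max)²) = 0 are real and of opposite sign (the folded singularity at λ* is a folded saddle). -/
/-- If λ* ∈ (-λ_max, λ_max), λ* > 0 and λ*² = λ_max(λ_max - 1/(2ε)), the roots
    of ξ² + ξ - 4ε²λ*(1-(λ*/λ_max)²) = 0 are real with opposite signs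
    (folded saddle). -/
theorem stmt4 (lm ε l : ℝ) (hlm : 0 < lm) (hε : 0 < ε)
    (hl1 : -lm < l) (hl2 : l < lm) (hpos : 0 < l)
    (hroot : l ^ 2 = lm * (lm - 1 / (2 * ε))) :
    ∃ ξ₁ ξ₂ : ℝ, ξ₁ < 0 ∧ 0 < ξ₂ ∧
      ∀ ξ : ℝ, ξ ^ 2 + ξ - 4 * ε ^ 2 * l * (1 - (l / lm) ^ 2) = 0 ↔
        (ξ = ξ₁ ∨ ξ = ξ₂) := by
  set c : ℝ := 4 * ε ^ 2 * l * (1 - (l / lm) ^ 2) with hc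
  have hlm' : lm ≠ 0 := ne_of_gt hlm
  have hratio : (l / lm) ^ 2 < 1 := by
    have : l / lm < 1 := (div_lt_one hlm).2 hl2
    have h0 : 0 < l / lm := div_pos hpos hlm
    nlinarith
  have hcpos : 0 < c := by
    have : 0 < 1 - (l / lm) ^ 2 := by linarith
    positivity
  set s : ℝ := Real.sqrt (1 + 4 * c) with hs
  have hs2 : s ^ 2 = 1 + 4 * c := Real.sq_sqrt (by linarith)
  have hs1 : 1 < s := by
    nlinarith [Real.sqrt_nonneg (1 + 4 * c)]
  refine ⟨(-1 - s) / 2, (-1 + s) / 2, by nlinarith, by nlinarith, fun ξ => ?_⟩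
  constructor
  · intro h
    have hfac : (ξ - (-1 - s) / 2) * (ξ - (-1 + s) / 2) = 0 := by nlinarith
    rcases mul_eq_zero.1 hfac with h' | h'
    · exact Or.inl (by linarith)
    · exact Or.inr (by linarith)
  · rintro (rfl | rfl) <;> nlinarith
end

section
/- Let λ_max > 0. The value ε* = (2 + √(4 + λ_max²))/(8λ_max) satisfies ε* > 1/(2λ_max), and at ε = ε* the negative root λ* = -√(λ_max(λ_max - 1/(2ε*))) of the folded-singularity condition makes the discriminant 1 + 16ε*²λ*(1 - (λ*/λ_max)²) equal to zero (the folded node becomes a folded focus). -/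
/-- At ε* = (2 + √(4+λ_max²))/(8λ_max) > 1/(2λ_max), the negative folded
    singularity λ* = -√(λ_max(λ_max - 1/(2ε*))) makes the discriminant
    1 + 16ε*²λ*(1-(λ*/λ_max)²) vanish: the folded node becomes a folded
    focus. -/
theorem stmt8 (lm : ℝ) (hlm : 0 < lm) :
    1 / (2 * lm) < (2 + Real.sqrt (4 + lm ^ 2)) / (8 * lm) ∧
    (1 + 16 * ((2 + Real.sqrt (4 + lm ^ 2)) / (8 * lm)) ^ 2 *
        (-Real.sqrt (lm * (lm - 1 / (2 * ((2 + Real.sqrt (4 + lm ^ 2)) / (8 * lm)))))) *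
        (1 - ((-Real.sqrt (lm * (lm - 1 / (2 * ((2 + Real.sqrt (4 + lm ^ 2)) / (8 * lm)))))) / lm) ^ 2)
      = 0) := by
  set s := Real.sqrt (4 + lm ^ 2) with hsdef
  have hs2 : s ^ 2 = 4 + lm ^ 2 := Real.sq_sqrt (by positivity)
  have hsnn : 0 ≤ s := Real.sqrt_nonneg _
  have hs : 2 < s := by nlinarith [sq_nonneg (s - 2), sq_nonneg lm]
  have hlm' : lm ≠ 0 := ne_of_gt hlm
  have hsp : (0:ℝ) < s + 2 := by linarith
  have hA : lm * (lm - 1 / (2 * ((2 + s) / (8 * lm)))) = lm ^ 2 * (s - 2) / (s + 2) := by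
    have h2s : (2:ℝ) + s ≠ 0 := by linarith
    field_simp
    ring
  have hApos : 0 ≤ lm ^ 2 * (s - 2) / (s + 2) := by
    apply div_nonneg _ hsp.le
    nlinarith
  set t := Real.sqrt (lm * (lm - 1 / (2 * ((2 + s) / (8 * lm))))) with htdef
  have htnn : 0 ≤ t := Real.sqrt_nonneg _
  have ht2 : t ^ 2 = lm ^ 2 * (s - 2) / (s + 2) := by
    rw [htdef, Real.sq_sqrt (hA ▸ hApos), hA]
  have hkey2 : (t * (s + 2)) ^ 2 = (lm ^ 2) ^ 2 := by
    have : t ^ 2 * (s + 2) = lm ^ 2 * (s - 2) := by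
      rw [ht2]; field_simp
    nlinarith [this]
  have hkey : t * (s + 2) = lm ^ 2 := by
    have h1 : 0 ≤ t * (s + 2) := mul_nonneg htnn hsp.le
    have h2 : (0:ℝ) < lm ^ 2 := by positivity
    nlinarith [hkey2]
  constructor
  · rw [div_lt_div_iff₀ (by positivity) (by positivity)]
    nlinarith
  · have h2s : (2:ℝ) + s ≠ 0 := by linarith
    have hsp' : s + 2 ≠ 0 := hsp.ne'
    have ht2' : t ^ 2 * (s + 2) = lm ^ 2 * (s - 2) := by
      rw [ht2]; field_simp
    field_simp
    linear_combination (-64 * lm ^ 2) * hkey + 16 * (2 + s) * t * ht2'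
end
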